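/- Let (d;a) be an h-regular pair and let g := gcd(a_{i_1},…,a_{i_m}) > 1 for some nonempty set of weights a_{i_1},…,a_{i_m} of the pair. Then the pair (d(g);a(g)) is h-regular, and the pair (d(g)/g; a(g)/g), obtained from (d(g);a(g)) by dividing every entry by g, is h'-regular with h' := h/gcd(g,h). -/

import Mathlib

open Finset

/-- The amplitude `δ` of the (sub)pair given by the degrees `d` indexed by `D`
and the weights `a` indexed by `A`. -/
def deltaOn {ι κ : Type*} (D : Finset ι) (d : ι → ℕ) (A : Finset κ) (a : κ → ℕ) : ℤ :=
  (∑ j ∈ D, (d j : ℤ)) - ∑ i ∈ A, (a i : ℤ)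

/-- The amplitude of a full pair `(d;a)`. -/
def deltaPair {ι κ : Type*} [Fintype ι] [Fintype κ] (d : ι → ℕ) (a : κ → ℕ) : ℤ :=
  deltaOn univ d univ a

/-- `h`-regularity of the (sub)pair given by the degrees `d` indexed by `D` and the
weights `a` indexed by `A`: for every nonempty subset `I ⊆ A` of the weight indices with
`a_I := gcd_{i ∈ I} a i > 1`, either there are `|I|` pairwise distinct degree indices
`p ∈ D` with `a_I ∣ d p`, or `a_I ∣ h`. -/
def IsHRegularOn {ι κ : Type*} (h : ℕ) (D : Finset ι) (d : ι → ℕ)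
    (A : Finset κ) (a : κ → ℕ) : Prop :=
  ∀ I : Finset κ, I ⊆ A → I.Nonempty → 1 < I.gcd a →
    (∃ P : Finset ι, P ⊆ D ∧ P.card = I.card ∧ ∀ j ∈ P, I.gcd a ∣ d j) ∨ I.gcd a ∣ h

/-- `h`-regularity of a full pair `(d;a)`. -/
def IsHRegularPair {ι κ : Type*} [Fintype ι] [Fintype κ] (h : ℕ) (d : ι → ℕ)
    (a : κ → ℕ) : Prop :=
  IsHRegularOn h univ d univ a

/-- The generalised `1/h`-Frobenius number `F^h` of the weights indexed by `A`.
Letting `g` be the gcd of the weights, this is the largest integer `z` divisible by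
`lcm g h` that is not a nonnegative integral combination of the weights; this agrees
with the renormalised definition `F^h = g * F^{h / gcd (g,h)} (a/g)`.  For `g = 1`
it is the largest multiple of `h` that is not a nonnegative integral combination of
the weights (so it equals `-h` if every positive multiple of `h` is such a combination),
and `frobOn 1 A a` is the ordinary Frobenius number `F` (so `F = -1` if some weight
equals `1`). -/
noncomputable def frobOn {κ : Type*} (h : ℕ) (A : Finset κ) (a : κ → ℕ) : ℤ :=
  sSup {z : ℤ | ((Nat.lcm (A.gcd a) h : ℕ) : ℤ) ∣ z ∧
    ¬ ∃ x : κ → ℕ, ((∑ i ∈ A, x i * a i : ℕ) : ℤ) = z}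

/-- The generalised `1/h`-Frobenius number `F^h` of a full tuple of weights. -/
noncomputable def frobNum {κ : Type*} [Fintype κ] (h : ℕ) (a : κ → ℕ) : ℤ :=
  frobOn h univ a
/-- **Corollary (regularity of the subpair of entries divisible by a gcd of weights).**
Let `(d;a)` be an `h`-regular pair and `g := gcd(a_{i₁},…,a_{i_m}) > 1` for some
weights of the pair.  Then `(d(g);a(g))` is `h`-regular, and `(d(g)/g;a(g)/g)` is
`h/gcd(g,h)`-regular. -/
theorem subpair_regularity (h c n : ℕ) (hh : 0 < h)
    (d : Fin c → ℕ) (a : Fin (n + 1) → ℕ)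
    (hd : ∀ j, 0 < d j) (ha : ∀ i, 0 < a i)
    (hreg : IsHRegularPair h d a)
    (S : Finset (Fin (n + 1))) (hS : S.Nonempty)
    (g : ℕ) (hgdef : g = S.gcd a) (hg : 1 < g) :
    IsHRegularOn h (Finset.univ.filter (fun j => g ∣ d j)) d
        (Finset.univ.filter (fun i => g ∣ a i)) a
    ∧ IsHRegularOn (h / Nat.gcd g h)
        (Finset.univ.filter (fun j => g ∣ d j)) (fun j => d j / g)
        (Finset.univ.filter (fun i => g ∣ a i)) (fun i => a i / g) := by
  constructor
  · intro I hIsub hIne hIgcd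
    rcases hreg I (Finset.subset_univ I) hIne hIgcd with ⟨P, _, hcard, hP⟩ | hdvd
    · left
      refine ⟨P, ?_, hcard, hP⟩
      intro j hj
      simp only [Finset.mem_filter, Finset.mem_univ, true_and]
      have hg' : g ∣ I.gcd a := Finset.dvd_gcd fun i hi => by
        have := hIsub hi
        simp only [Finset.mem_filter] at this
        exact this.2
      exact hg'.trans (hP j hj)
    · right; exact hdvd
  · intro I hIsub hIne hIgcd
    have hgI : ∀ i ∈ I, g ∣ a i := fun i hi => by
      have := hIsub hi; simp only [Finset.mem_filter] at this; exact this.2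
    set e := I.gcd (fun i => a i / g) with he
    have hge : g * e ∣ I.gcd a := Finset.dvd_gcd fun i hi => by
      have h1 : e ∣ a i / g := Finset.gcd_dvd hi
      exact (Nat.dvd_div_iff_mul_dvd (hgI i hi)).mp h1
    have hIgcd' : 1 < I.gcd a := by
      have hgdvd : g ∣ I.gcd a := Finset.dvd_gcd hgI
      have hpos : 0 < I.gcd a := by
        obtain ⟨i, hi⟩ := hIne
        exact Nat.pos_of_dvd_of_pos (Finset.gcd_dvd hi) (ha i)
      exact lt_of_lt_of_le hg (Nat.le_of_dvd hpos hgdvd)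
    rcases hreg I (Finset.subset_univ I) hIne hIgcd' with ⟨P, _, hcard, hP⟩ | hdvd
    · left
      refine ⟨P, ?_, hcard, ?_⟩
      · intro j hj
        simp only [Finset.mem_filter, Finset.mem_univ, true_and]
        exact (dvd_mul_right g e).trans (hge.trans (hP j hj))
      · intro j hj
        have hgd : g * e ∣ d j := hge.trans (hP j hj)
        exact (Nat.dvd_div_iff_mul_dvd ((dvd_mul_right g e).trans hgd)).mpr hgd
    · right
      have hgeh : g * e ∣ h := hge.trans hdvd
      have hgh : g ∣ h := (dvd_mul_right g e).trans hgeh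
      rw [Nat.gcd_eq_left hgh]
      exact (Nat.dvd_div_iff_mul_dvd hgh).mpr hgeh
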